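/- For every a > 0, the probit surrogate function φ : ℝ → ℝ defined by φ(u) = log Φ(a·u), where Φ is the cumulative distribution function of the standard normal distribution, is strictly concave on ℝ, strictly monotone increasing on ℝ, differentiable on ℝ, and satisfies φ'(0) = a·√(2/π) > 0. -/

import Mathlib

open MeasureTheory Real Set Filter
open scoped ENNReal

/-- The cumulative distribution function of the standard normal distribution,
`Φ(t) = ∫_{−∞}^{t} (1/√(2π))·exp(−s²/2) ds`. -/
noncomputable def stdNormalCDF (t : ℝ) : ℝ :=
  ∫ s in Set.Iic t, (Real.sqrt (2 * Real.pi))⁻¹ * Real.exp (-(s ^ 2) / 2)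

/-- The standard normal density. -/
noncomputable def stdNormalPDF (s : ℝ) : ℝ :=
  (Real.sqrt (2 * Real.pi))⁻¹ * Real.exp (-(s ^ 2) / 2)

lemma stdNormalPDF_pos (s : ℝ) : 0 < stdNormalPDF s :=
  mul_pos (inv_pos.2 (Real.sqrt_pos.2 (by positivity))) (Real.exp_pos _)

lemma stdNormalPDF_continuous : Continuous stdNormalPDF := by
  unfold stdNormalPDF
  continuity

lemma stdNormalPDF_integrable : Integrable stdNormalPDF := by
  have h := (integrable_exp_neg_mul_sq (by norm_num : (0:ℝ) < 1/2)).const_mul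
    (Real.sqrt (2 * Real.pi))⁻¹
  refine h.congr (Filter.Eventually.of_forall fun x => ?_)
  unfold stdNormalPDF
  ring_nf

lemma moment_integrable : Integrable (fun s : ℝ => s * stdNormalPDF s) := by
  have h := (integrable_mul_exp_neg_mul_sq (by norm_num : (0:ℝ) < 1/2)).const_mul
    (Real.sqrt (2 * Real.pi))⁻¹
  refine h.congr (Filter.Eventually.of_forall fun x => ?_)
  unfold stdNormalPDF
  ring_nf

lemma stdNormalCDF_eq (u : ℝ) : stdNormalCDF u = ∫ s in Set.Iic u, stdNormalPDF s := rfl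

lemma hasDerivAt_stdNormalCDF (t : ℝ) : HasDerivAt stdNormalCDF (stdNormalPDF t) t := by
  have key : stdNormalCDF = fun u => stdNormalCDF 0 + ∫ s in (0:ℝ)..u, stdNormalPDF s := by
    funext u
    have h2 := intervalIntegral.integral_Iic_sub_Iic
      (stdNormalPDF_integrable.integrableOn (s := Set.Iic 0))
      (stdNormalPDF_integrable.integrableOn (s := Set.Iic u))
    rw [stdNormalCDF_eq, stdNormalCDF_eq]
    linarith [h2]
  rw [key]
  have h := intervalIntegral.integral_hasDerivAt_right
    (stdNormalPDF_integrable.intervalIntegrable (a := 0) (b := t))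
    (stdNormalPDF_continuous.stronglyMeasurableAtFilter _ _)
    stdNormalPDF_continuous.continuousAt
  simpa using h.const_add (stdNormalCDF 0)

lemma stdNormalCDF_pos (t : ℝ) : 0 < stdNormalCDF t := by
  rw [stdNormalCDF_eq]
  rw [MeasureTheory.setIntegral_pos_iff_support_of_nonneg_ae
    (Filter.Eventually.of_forall fun s => (stdNormalPDF_pos s).le)
    stdNormalPDF_integrable.integrableOn]
  have hsupp : Function.support stdNormalPDF = Set.univ := by
    ext s; simp [Function.mem_support, (stdNormalPDF_pos s).ne']
  rw [hsupp, Set.univ_inter]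
  simp [Real.volume_Iic]

lemma hasDerivAt_stdNormalPDF (s : ℝ) : HasDerivAt stdNormalPDF (-s * stdNormalPDF s) s := by
  have h1 : HasDerivAt (fun x : ℝ => -(x ^ 2) / 2) (-s) s := by
    have h := ((hasDerivAt_pow 2 s).neg).div_const 2
    refine h.congr_deriv ?_
    push_cast
    ring
  have h2 := (h1.exp).const_mul (Real.sqrt (2 * Real.pi))⁻¹
  refine h2.congr_deriv ?_
  unfold stdNormalPDF
  ring

lemma moment_Iic (t : ℝ) : ∫ s in Set.Iic t, s * stdNormalPDF s = -(stdNormalPDF t) := by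
  have htend : Filter.Tendsto (fun s : ℝ => -(stdNormalPDF s)) Filter.atBot (nhds 0) := by
    have hsq : Filter.Tendsto (fun s : ℝ => s ^ 2) Filter.atBot Filter.atTop := by
      have h := (tendsto_pow_atTop (n := 2) (two_ne_zero)).comp
        (tendsto_neg_atBot_atTop (G := ℝ))
      refine h.congr fun x => ?_
      simp only [Function.comp_apply]
      rw [Even.neg_pow even_two]
    have harg : Filter.Tendsto (fun s : ℝ => -(s ^ 2) / 2) Filter.atBot Filter.atBot := by
      have h := tendsto_neg_atTop_atBot.comp (hsq.atTop_div_const (by norm_num : (0:ℝ) < 2))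
      refine h.congr fun x => ?_
      simp only [Function.comp_apply]
      ring
    have hexp : Filter.Tendsto (fun s : ℝ => Real.exp (-(s ^ 2) / 2)) Filter.atBot (nhds 0) :=
      Real.tendsto_exp_atBot.comp harg
    have := (hexp.const_mul (Real.sqrt (2 * Real.pi))⁻¹).neg
    simpa [stdNormalPDF] using this
  have h := MeasureTheory.integral_Iic_of_hasDerivAt_of_tendsto'
    (f := fun s => -(stdNormalPDF s)) (f' := fun s => s * stdNormalPDF s) (a := t) (m := 0)
    (fun x _ => ((hasDerivAt_stdNormalPDF x).neg).congr_deriv (by ring))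
    moment_integrable.integrableOn htend
  simpa using h

lemma mills (t : ℝ) : 0 < stdNormalPDF t + t * stdNormalCDF t := by
  rcases le_or_gt 0 t with ht | ht
  · exact add_pos_of_pos_of_nonneg (stdNormalPDF_pos t)
      (mul_nonneg ht (stdNormalCDF_pos t).le)
  · have hint_s : IntegrableOn (fun s => s * stdNormalPDF s) (Set.Iic t) :=
      moment_integrable.integrableOn
    have hint_c : IntegrableOn (fun s => t * stdNormalPDF s) (Set.Iic t) :=
      (stdNormalPDF_integrable.const_mul t).integrableOn
    have hint_d : IntegrableOn (fun s => (t - s) * stdNormalPDF s) (Set.Iic t) :=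
      (hint_c.sub hint_s).congr (Filter.Eventually.of_forall fun s => by simp only [Pi.sub_apply]; ring)
    have hae : 0 ≤ᵐ[volume.restrict (Set.Iic t)] fun s => (t - s) * stdNormalPDF s := by
      refine (MeasureTheory.ae_restrict_iff' measurableSet_Iic).2
        (Filter.Eventually.of_forall fun s hs => ?_)
      exact mul_nonneg (by simp only [Set.mem_Iic] at hs; linarith) (stdNormalPDF_pos s).le
    have hpos : 0 < ∫ s in Set.Iic t, (t - s) * stdNormalPDF s := by
      rw [MeasureTheory.setIntegral_pos_iff_support_of_nonneg_ae hae hint_d]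
      have hsub : Set.Iio t ⊆
          Function.support (fun s => (t - s) * stdNormalPDF s) ∩ Set.Iic t := by
        intro s hs
        have hst : s < t := hs
        exact ⟨(mul_pos (by linarith) (stdNormalPDF_pos s)).ne', hst.le⟩
      calc (0:ℝ≥0∞) < volume (Set.Iio t) := by simp [Real.volume_Iio]
        _ ≤ _ := measure_mono hsub
    have hsplit : ∫ s in Set.Iic t, (t - s) * stdNormalPDF s
        = t * stdNormalCDF t + stdNormalPDF t := by
      have heq : ∫ s in Set.Iic t, (t - s) * stdNormalPDF s
          = (∫ s in Set.Iic t, t * stdNormalPDF s) - ∫ s in Set.Iic t, s * stdNormalPDF s := by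
        rw [← MeasureTheory.integral_sub hint_c hint_s]
        congr 1; funext s; ring
      rw [heq, moment_Iic, MeasureTheory.integral_const_mul, ← stdNormalCDF_eq]
      ring
    rw [hsplit] at hpos
    linarith

lemma stdNormalCDF_zero : stdNormalCDF 0 = 1/2 := by
  have htot : ∫ s : ℝ, stdNormalPDF s = 1 := by
    have hg := integral_gaussian (1/2 : ℝ)
    have heq : ∫ s : ℝ, stdNormalPDF s
        = (Real.sqrt (2 * Real.pi))⁻¹ * ∫ s : ℝ, Real.exp (-(1/2) * s ^ 2) := by
      rw [← MeasureTheory.integral_const_mul]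
      congr 1; funext s; unfold stdNormalPDF; ring_nf
    rw [heq, hg, show Real.pi / (1/2 : ℝ) = 2 * Real.pi by ring]
    exact inv_mul_cancel₀ (Real.sqrt_ne_zero'.2 (by positivity))
  have hsym : ∫ s in Set.Iic (0:ℝ), stdNormalPDF s = ∫ s in Set.Ioi (0:ℝ), stdNormalPDF s := by
    have h1 : ∫ s in Set.Iic (0:ℝ), stdNormalPDF s
        = ∫ s in Set.Iic (0:ℝ), stdNormalPDF (-s) := by
      refine setIntegral_congr_fun measurableSet_Iic fun s _ => ?_
      unfold stdNormalPDF; rw [neg_pow]; ring_nf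
    rw [h1, integral_comp_neg_Iic, neg_zero]
  have hadd : (∫ s in Set.Iic (0:ℝ), stdNormalPDF s) + ∫ s in Set.Ioi (0:ℝ), stdNormalPDF s
      = ∫ s : ℝ, stdNormalPDF s :=
    intervalIntegral.integral_Iic_add_Ioi stdNormalPDF_integrable.integrableOn
      stdNormalPDF_integrable.integrableOn
  rw [stdNormalCDF_eq]
  rw [htot, ← hsym] at hadd
  linarith

lemma sqrt_two_div_pi : Real.sqrt (2 / Real.pi) = 2 / Real.sqrt (2 * Real.pi) := by
  have h : (2:ℝ) / Real.pi = 4 / (2 * Real.pi) := by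
    field_simp
    ring
  rw [h, Real.sqrt_div (by norm_num : (0:ℝ) ≤ 4),
    show (4:ℝ) = 2 ^ 2 by norm_num, Real.sqrt_sq (by norm_num : (0:ℝ) ≤ 2)]

theorem probit_surrogate_properties (a : ℝ) (ha : 0 < a) :
    StrictConcaveOn ℝ Set.univ (fun u : ℝ => Real.log (stdNormalCDF (a * u))) ∧
    StrictMono (fun u : ℝ => Real.log (stdNormalCDF (a * u))) ∧
    Differentiable ℝ (fun u : ℝ => Real.log (stdNormalCDF (a * u))) ∧
    deriv (fun u : ℝ => Real.log (stdNormalCDF (a * u))) 0 = a * Real.sqrt (2 / Real.pi) ∧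
    0 < a * Real.sqrt (2 / Real.pi) := by
  set g : ℝ → ℝ := fun u => Real.log (stdNormalCDF (a * u)) with hgdef
  have hΦ : ∀ u : ℝ, HasDerivAt (fun u : ℝ => stdNormalCDF (a * u))
      (stdNormalPDF (a * u) * a) u := fun u => by
    have hinner : HasDerivAt (fun u : ℝ => a * u) a u := by
      simpa using (hasDerivAt_id u).const_mul a
    exact (hasDerivAt_stdNormalCDF (a * u)).comp u hinner
  have hg : ∀ u : ℝ, HasDerivAt g (a * stdNormalPDF (a * u) / stdNormalCDF (a * u)) u :=
    fun u => ((hΦ u).log (stdNormalCDF_pos (a * u)).ne').congr_deriv (by ring)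
  have hderiv : deriv g = fun u => a * stdNormalPDF (a * u) / stdNormalCDF (a * u) :=
    funext fun u => (hg u).deriv
  have hnum : ∀ u : ℝ, HasDerivAt (fun u : ℝ => a * stdNormalPDF (a * u))
      (a * (-(a * u) * stdNormalPDF (a * u) * a)) u := fun u => by
    have hinner : HasDerivAt (fun u : ℝ => a * u) a u := by
      simpa using (hasDerivAt_id u).const_mul a
    exact (((hasDerivAt_stdNormalPDF (a * u)).comp u hinner).const_mul a).congr_deriv (by ring)
  have hg2 : ∀ u : ℝ, HasDerivAt (fun u => a * stdNormalPDF (a * u) / stdNormalCDF (a * u))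
      ((a * (-(a * u) * stdNormalPDF (a * u) * a) * stdNormalCDF (a * u)
        - a * stdNormalPDF (a * u) * (stdNormalPDF (a * u) * a)) / stdNormalCDF (a * u) ^ 2) u :=
    fun u => (hnum u).div (hΦ u) (stdNormalCDF_pos (a * u)).ne'
  have hdiff : Differentiable ℝ g := fun u => (hg u).differentiableAt
  refine ⟨?_, ?_, hdiff, ?_, mul_pos ha (Real.sqrt_pos.2 (by positivity))⟩
  · apply StrictConcaveOn.subset ?_ (Set.subset_univ _) convex_univ
    refine strictConcaveOn_of_deriv2_neg (convex_univ)
      hdiff.continuous.continuousOn fun u _ => ?_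
    have h2 : deriv^[2] g u = deriv (deriv g) u := rfl
    rw [h2, hderiv, (hg2 u).deriv]
    apply div_neg_of_neg_of_pos
    · have hm := mills (a * u)
      have hφ := stdNormalPDF_pos (a * u)
      have hkey : a * (-(a * u) * stdNormalPDF (a * u) * a) * stdNormalCDF (a * u)
          - a * stdNormalPDF (a * u) * (stdNormalPDF (a * u) * a)
          = -(a * a * stdNormalPDF (a * u)
              * (stdNormalPDF (a * u) + (a * u) * stdNormalCDF (a * u))) := by ring
      rw [hkey]
      have : 0 < a * a * stdNormalPDF (a * u)
          * (stdNormalPDF (a * u) + (a * u) * stdNormalCDF (a * u)) :=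
        mul_pos (mul_pos (mul_pos ha ha) hφ) hm
      linarith
    · exact pow_pos (stdNormalCDF_pos (a * u)) 2
  · apply strictMono_of_deriv_pos
    intro u
    rw [hderiv]
    exact div_pos (mul_pos ha (stdNormalPDF_pos (a * u))) (stdNormalCDF_pos (a * u))
  · rw [hderiv]
    simp only [mul_zero]
    rw [stdNormalCDF_zero, sqrt_two_div_pi]
    have h0 : stdNormalPDF 0 = (Real.sqrt (2 * Real.pi))⁻¹ := by
      unfold stdNormalPDF; norm_num
    rw [h0]
    have hs : Real.sqrt (2 * Real.pi) ≠ 0 := Real.sqrt_ne_zero'.2 (by positivity)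
    field_simp
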